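/- Let G be a finite group. Then the maximum over all generating sets X of G of the diameter diam(G,X) is at most |G| − rank(G), where rank(G) is the minimal size of a generating set of G. -/

import Mathlib

open Subgroup

/-- Minimal length of a word over `X` (positive letters only) representing `g`. -/
noncomputable def wLen {G : Type*} [Group G] (X : Set G) (g : G) : ℕ :=
  sInf {n | ∃ l : List G, (∀ x ∈ l, x ∈ X) ∧ l.length = n ∧ l.prod = g}

/-- Minimal length of a word over `X ∪ X⁻¹` representing `g`. -/
noncomputable def sLen {G : Type*} [Group G] (X : Set G) (g : G) : ℕ :=
  sInf {n | ∃ l : List G, (∀ x ∈ l, x ∈ X ∨ x⁻¹ ∈ X) ∧ l.length = n ∧ l.prod = g}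

/-- Diameter of `G` with respect to `X` (positive words). -/
noncomputable def diamW (G : Type*) [Group G] (X : Set G) : ℕ :=
  sSup (Set.range (wLen X))

/-- Symmetric diameter of `G` with respect to `X`. -/
noncomputable def diamS (G : Type*) [Group G] (X : Set G) : ℕ :=
  sSup (Set.range (sLen X))

/-- Maximum diameter over all generating sets. -/
noncomputable def DW (G : Type*) [Group G] : ℕ :=
  sSup {d | ∃ X : Set G, Subgroup.closure X = ⊤ ∧ d = diamW G X}

/-- Maximum symmetric diameter over all generating sets. -/
noncomputable def DS (G : Type*) [Group G] : ℕ :=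
  sSup {d | ∃ X : Set G, Subgroup.closure X = ⊤ ∧ d = diamS G X}

/-- Minimal size of a generating set of `G`. -/
noncomputable def rk (G : Type*) [Group G] : ℕ :=
  sInf {n | ∃ S : Finset G, S.card = n ∧ Subgroup.closure (S : Set G) = ⊤}

/-! ### Auxiliary lemmas -/

lemma wLen_le_of_word {G : Type*} [Group G] {X : Set G} {l : List G}
    (hl : ∀ x ∈ l, x ∈ X) : wLen X l.prod ≤ l.length :=
  Nat.sInf_le ⟨l, hl, rfl, rfl⟩

lemma wLen_one {G : Type*} [Group G] (X : Set G) : wLen X (1 : G) = 0 :=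
  Nat.eq_zero_of_le_zero (Nat.sInf_le ⟨[], by simp, rfl, rfl⟩)

/-- In a finite group, the subgroup closure is covered by the submonoid closure. -/
lemma mem_submonoid_closure_of_top {G : Type*} [Group G] [Fintype G] {X : Set G}
    (h : Subgroup.closure X = ⊤) (g : G) : g ∈ Submonoid.closure X := by
  let K : Subgroup G :=
    { toSubmonoid := Submonoid.closure X
      inv_mem' := by
        intro a ha
        have hne : orderOf a ≠ 0 := (orderOf_pos a).ne'
        have h1 : a ^ (orderOf a - 1) * a = 1 := by
          rw [pow_sub_one_mul hne, pow_orderOf_eq_one]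
        have h2 : a⁻¹ = a ^ (orderOf a - 1) := inv_eq_of_mul_eq_one_left h1
        rw [h2]
        exact Submonoid.pow_mem _ ha _ }
  have hK : Subgroup.closure X ≤ K := (Subgroup.closure_le K).mpr Submonoid.subset_closure
  exact hK (h ▸ Subgroup.mem_top g)

/-- Extend a generating set of a subgroup to one of the whole group,
adding `t` generators where the cardinality at least doubles each time. -/
lemma ext_chain {G : Type*} [Group G] [Fintype G] :
    ∀ (k : ℕ) (S : Finset G),
      Fintype.card G - Nat.card (Subgroup.closure (S : Set G)) ≤ k →
      ∃ (T : Finset G) (t : ℕ), Subgroup.closure (T : Set G) = ⊤ ∧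
        T.card ≤ S.card + t ∧
        Nat.card (Subgroup.closure (S : Set G)) * 2 ^ t ≤ Fintype.card G := by
  have hNG : Nat.card G = Fintype.card G := Nat.card_eq_fintype_card
  intro k
  induction k with
  | zero =>
      intro S hS
      have hcard : Nat.card (Subgroup.closure (S : Set G)) ≤ Nat.card G :=
        Subgroup.card_le_card_group _
      have htop : Subgroup.closure (S : Set G) = ⊤ :=
        Subgroup.eq_top_of_card_eq _ (by omega)
      refine ⟨S, 0, htop, by simp, ?_⟩
      rw [htop, pow_zero, mul_one, ← hNG]
      exact Subgroup.card_le_card_group _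
  | succ k ih =>
      intro S hS
      by_cases htop : Subgroup.closure (S : Set G) = ⊤
      · refine ⟨S, 0, htop, by simp, ?_⟩
        rw [htop, pow_zero, mul_one, ← hNG]
        exact Subgroup.card_le_card_group _
      · classical
        obtain ⟨x, hx⟩ : ∃ x, x ∉ Subgroup.closure (S : Set G) := by
          by_contra hall
          push_neg at hall
          exact htop ((Subgroup.eq_top_iff' _).mpr hall)
        have hsub : (S : Set G) ⊆ ((insert x S : Finset G) : Set G) := by
          intro a ha
          simp only [Finset.coe_insert, Set.mem_insert_iff]
          exact Or.inr ha
        have hle : Subgroup.closure (S : Set G) ≤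
            Subgroup.closure ((insert x S : Finset G) : Set G) := Subgroup.closure_mono hsub
        have hxH' : x ∈ Subgroup.closure ((insert x S : Finset G) : Set G) :=
          Subgroup.subset_closure (by simp)
        have hlt : Subgroup.closure (S : Set G) <
            Subgroup.closure ((insert x S : Finset G) : Set G) :=
          lt_of_le_of_ne hle (fun hEq => hx (hEq ▸ hxH'))
        have hcardlt : Nat.card (Subgroup.closure (S : Set G)) <
            Nat.card (Subgroup.closure ((insert x S : Finset G) : Set G)) := by
          have h1 : ((Subgroup.closure (S : Set G) : Subgroup G) : Set G) ⊂
              ((Subgroup.closure ((insert x S : Finset G) : Set G) : Subgroup G) : Set G) :=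
            SetLike.coe_ssubset_coe.mpr hlt
          have h2 := Set.ncard_lt_ncard h1 (Set.toFinite _)
          have e1 : Nat.card (Subgroup.closure (S : Set G)) =
              ((Subgroup.closure (S : Set G) : Subgroup G) : Set G).ncard :=
            Nat.card_coe_set_eq _
          have e2 : Nat.card (Subgroup.closure ((insert x S : Finset G) : Set G)) =
              ((Subgroup.closure ((insert x S : Finset G) : Set G) : Subgroup G) : Set G).ncard :=
            Nat.card_coe_set_eq _
          rw [e1, e2]
          exact h2
        have hdvd : Nat.card (Subgroup.closure (S : Set G)) ∣
            Nat.card (Subgroup.closure ((insert x S : Finset G) : Set G)) :=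
          Subgroup.card_dvd_of_le hle
        have hpos : 0 < Nat.card (Subgroup.closure (S : Set G)) := Nat.card_pos
        have hdouble : 2 * Nat.card (Subgroup.closure (S : Set G)) ≤
            Nat.card (Subgroup.closure ((insert x S : Finset G) : Set G)) := by
          obtain ⟨c, hc⟩ := hdvd
          rcases c with _ | _ | c
          · omega
          · omega
          · nlinarith
        have hcard' : Nat.card (Subgroup.closure ((insert x S : Finset G) : Set G)) ≤
            Fintype.card G := by
          rw [← hNG]; exact Subgroup.card_le_card_group _
        obtain ⟨T, t, hT, hTcard, hTpow⟩ := ih (insert x S) (by omega)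
        refine ⟨T, t + 1, hT, ?_, ?_⟩
        · have : (insert x S).card ≤ S.card + 1 := Finset.card_insert_le x S
          omega
        · calc Nat.card (Subgroup.closure (S : Set G)) * 2 ^ (t + 1)
              = (2 * Nat.card (Subgroup.closure (S : Set G))) * 2 ^ t := by ring
            _ ≤ Nat.card (Subgroup.closure ((insert x S : Finset G) : Set G)) * 2 ^ t :=
                Nat.mul_le_mul_right _ hdouble
            _ ≤ Fintype.card G := hTpow

/-- Key combinatorial lemma: for a geodesic word `l` over `X`, the subgroup generated by
its letters contains at least `l.length + m` elements, where `m` letters suffice to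
generate it. -/
lemma key_lemma {G : Type*} [Group G] (X : Set G) :
    ∀ l : List G, (∀ a ∈ l, a ∈ X) →
    (∀ l₁ l₂ : List G, l = l₁ ++ l₂ → wLen X l₁.prod = l₁.length) →
    ∃ S A : Finset G,
      (↑S : Set G) ⊆ {a | a ∈ l} ∧
      Subgroup.closure (↑S : Set G) = Subgroup.closure {a | a ∈ l} ∧
      (↑A : Set G) ⊆ (Subgroup.closure {a | a ∈ l} : Subgroup G) ∧
      (∀ a ∈ A, wLen X a ≤ l.length) ∧
      (1 : G) ∈ A ∧
      l.length + S.card ≤ A.card := by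
  classical
  intro l
  induction l using List.reverseRecOn with
  | nil =>
      intro _ _
      refine ⟨∅, {1}, by simp, by simp, ?_, ?_, by simp, by simp⟩
      · intro a ha
        simp only [Finset.coe_singleton, Set.mem_singleton_iff] at ha
        simp [ha, one_mem]
      · intro a ha
        simp only [Finset.mem_singleton] at ha
        simp [ha, wLen_one]
  | append_singleton l' x ih =>
      intro hletters geo
      have hx : x ∈ X := hletters x (by simp)
      have hletters' : ∀ a ∈ l', a ∈ X := fun a ha => hletters a (by simp [ha])
      have geo' : ∀ l₁ l₂ : List G, l' = l₁ ++ l₂ → wLen X l₁.prod = l₁.length := by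
        intro l₁ l₂ hsplit
        exact geo l₁ (l₂ ++ [x]) (by rw [hsplit, List.append_assoc])
      obtain ⟨S', A', hS1, hS2, hA1, hA2, hone, hcard⟩ := ih hletters' geo'
      have hlenapp : (l' ++ [x]).length = l'.length + 1 := by simp
      have hqlen : wLen X ((l' ++ [x]).prod) = l'.length + 1 := by
        rw [geo (l' ++ [x]) [] (by simp), hlenapp]
      have hqA' : (l' ++ [x]).prod ∉ A' := by
        intro hqmem
        have := hA2 _ hqmem
        omega
      have hLsub : {a : G | a ∈ l'} ⊆ {a : G | a ∈ l' ++ [x]} := by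
        intro a ha; simp only [Set.mem_setOf_eq, List.mem_append] at *; exact Or.inl ha
      have hxmemL : x ∈ {a : G | a ∈ l' ++ [x]} := by simp
      have hmono : Subgroup.closure {a : G | a ∈ l'} ≤ Subgroup.closure {a : G | a ∈ l' ++ [x]} :=
        Subgroup.closure_mono hLsub
      have hqmemcl : (l' ++ [x]).prod ∈ Subgroup.closure {a : G | a ∈ l' ++ [x]} :=
        Subgroup.list_prod_mem _ (fun y hy => Subgroup.subset_closure hy)
      have hwx : wLen X x ≤ 1 := by
        have h1 : wLen X (([x] : List G).prod) ≤ ([x] : List G).length :=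
          wLen_le_of_word (by simpa using hx)
        simpa using h1
      by_cases hjump : x ∈ Subgroup.closure {a : G | a ∈ l'}
      · -- no jump
        refine ⟨S', insert (l' ++ [x]).prod A', ?_, ?_, ?_, ?_, ?_, ?_⟩
        · exact fun a ha => hLsub (hS1 ha)
        · refine le_antisymm (hS2 ▸ hmono) ?_
          refine (Subgroup.closure_le _).mpr ?_
          intro a ha
          simp only [Set.mem_setOf_eq, List.mem_append, List.mem_singleton] at ha
          rcases ha with ha | rfl
          · exact hS2 ▸ (Subgroup.subset_closure ha : a ∈ Subgroup.closure {b : G | b ∈ l'})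
          · exact hS2 ▸ hjump
        · intro a ha
          simp only [Finset.coe_insert, Set.mem_insert_iff] at ha
          rcases ha with rfl | ha
          · exact hqmemcl
          · exact hmono (hA1 ha)
        · intro a ha
          rcases Finset.mem_insert.mp ha with rfl | ha
          · omega
          · have := hA2 a ha
            omega
        · exact Finset.mem_insert_of_mem hone
        · rw [Finset.card_insert_of_notMem hqA', hlenapp]
          omega
      · -- jump
        have hxA' : x ∉ A' := fun hmem => hjump (hA1 hmem)
        have hxS' : x ∉ S' := fun hmem =>
          hjump (hS2 ▸ Subgroup.subset_closure (Finset.mem_coe.mpr hmem))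
        refine ⟨insert x S', insert (l' ++ [x]).prod (insert x A'), ?_, ?_, ?_, ?_, ?_, ?_⟩
        · intro a ha
          simp only [Finset.coe_insert, Set.mem_insert_iff] at ha
          rcases ha with rfl | ha
          · exact hxmemL
          · exact hLsub (hS1 ha)
        · refine le_antisymm ?_ ?_
          · refine (Subgroup.closure_le _).mpr ?_
            intro a ha
            simp only [Finset.coe_insert, Set.mem_insert_iff] at ha
            rcases ha with rfl | ha
            · exact Subgroup.subset_closure hxmemL
            · exact Subgroup.subset_closure (hLsub (hS1 ha))
          · refine (Subgroup.closure_le _).mpr ?_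
            intro a ha
            simp only [Set.mem_setOf_eq, List.mem_append, List.mem_singleton] at ha
            have hxin : x ∈ Subgroup.closure ((insert x S' : Finset G) : Set G) :=
              Subgroup.subset_closure (by simp)
            have hmono2 : Subgroup.closure ((S' : Finset G) : Set G) ≤
                Subgroup.closure ((insert x S' : Finset G) : Set G) := by
              apply Subgroup.closure_mono
              intro b hb
              simp only [Finset.coe_insert, Set.mem_insert_iff]
              exact Or.inr hb
            rcases ha with ha | rfl
            · have h3 : a ∈ Subgroup.closure ((S' : Finset G) : Set G) :=
                hS2 ▸ Subgroup.subset_closure ha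
              exact hmono2 h3
            · exact hxin
        · intro a ha
          simp only [Finset.coe_insert, Set.mem_insert_iff] at ha
          rcases ha with rfl | rfl | ha
          · exact hqmemcl
          · exact Subgroup.subset_closure hxmemL
          · exact hmono (hA1 ha)
        · intro a ha
          simp only [Finset.mem_insert] at ha
          rw [hlenapp]
          rcases ha with rfl | rfl | ha
          · omega
          · omega
          · have := hA2 a ha; omega
        · exact Finset.mem_insert_of_mem (Finset.mem_insert_of_mem hone)
        · have hScard : (insert x S').card = S'.card + 1 := Finset.card_insert_of_notMem hxS'
          rw [hlenapp, hScard]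
          by_cases hqx : (l' ++ [x]).prod = x
          · -- then l'.prod = 1, so l' = [] and S' = ∅
            have hprod1 : l'.prod = 1 := by
              have h4 : l'.prod * x = x := by simpa using hqx
              have := mul_right_cancel (a := l'.prod) (b := x) (c := 1) (by rw [h4, one_mul])
              exact this
            have hlen0 : l'.length = 0 := by
              have := geo' l' [] (by simp)
              rw [hprod1, wLen_one] at this
              omega
            have hS'card : S'.card = 0 := by
              have hnil : l' = [] := List.length_eq_zero_iff.mp hlen0
              rw [hnil] at hS1
              have hS'empty : S' = ∅ := by
                ext a
                simp only [Finset.notMem_empty, iff_false]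
                intro ha
                have h6 := hS1 (Finset.mem_coe.mpr ha)
                simp at h6
              simp [hS'empty]
            have hAcard : (insert (l' ++ [x]).prod (insert x A')).card =
                (insert x A').card := by
              rw [hqx, Finset.insert_idem]
            rw [hAcard, Finset.card_insert_of_notMem hxA']
            have hA'pos : 1 ≤ A'.card := Finset.card_pos.mpr ⟨1, hone⟩
            omega
          · have hqnotin : (l' ++ [x]).prod ∉ insert x A' := by
              intro hmem
              rcases Finset.mem_insert.mp hmem with h | h
              · exact hqx h
              · exact hqA' h
            rw [Finset.card_insert_of_notMem hqnotin, Finset.card_insert_of_notMem hxA']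
            omega

/-- The central estimate: `wLen X g + rk G ≤ |G|` for any generating set `X`. -/
lemma main_bound {G : Type*} [Group G] [Fintype G] {X : Set G}
    (hX : Subgroup.closure X = ⊤) (g : G) :
    wLen X g + rk G ≤ Fintype.card G := by
  obtain ⟨l0, hl0X, hl0prod⟩ :=
    Submonoid.exists_list_of_mem_closure (mem_submonoid_closure_of_top hX g)
  have hne : {n | ∃ l : List G, (∀ x ∈ l, x ∈ X) ∧ l.length = n ∧ l.prod = g}.Nonempty :=
    ⟨l0.length, l0, hl0X, rfl, hl0prod⟩
  obtain ⟨l, hlX, hlen, hprod⟩ := Nat.sInf_mem hne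
  have hwg : wLen X g = l.length := by rw [wLen]; omega
  -- geodesic property
  have geo : ∀ l₁ l₂ : List G, l = l₁ ++ l₂ → wLen X l₁.prod = l₁.length := by
    intro l₁ l₂ hsplit
    have hl₁X : ∀ x ∈ l₁, x ∈ X := fun x hx =>
      hlX x (by rw [hsplit]; exact List.mem_append_left _ hx)
    have hl₂X : ∀ x ∈ l₂, x ∈ X := fun x hx =>
      hlX x (by rw [hsplit]; exact List.mem_append_right _ hx)
    refine le_antisymm (wLen_le_of_word hl₁X) ?_
    by_contra hlt
    push_neg at hlt
    have hne1 : {n | ∃ w : List G, (∀ x ∈ w, x ∈ X) ∧ w.length = n ∧ w.prod = l₁.prod}.Nonempty :=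
      ⟨l₁.length, l₁, hl₁X, rfl, rfl⟩
    obtain ⟨w, hwX, hwlen, hwprod⟩ := Nat.sInf_mem hne1
    have hwlt : w.length < l₁.length := by
      rw [hwlen]; exact hlt
    have hshort : wLen X g ≤ (w ++ l₂).length := by
      apply Nat.sInf_le
      refine ⟨w ++ l₂, ?_, rfl, ?_⟩
      · intro y hy
        rcases List.mem_append.mp hy with h | h
        · exact hwX y h
        · exact hl₂X y h
      · rw [List.prod_append, hwprod, ← List.prod_append, ← hsplit, hprod]
    rw [hwg, hsplit] at hshort
    simp only [List.length_append] at hshort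
    omega
  obtain ⟨S, A, hS1, hS2, hA1, hA2, hone, hcard⟩ := key_lemma X l hlX geo
  -- A.card ≤ Nat.card (closure S)
  have hAcard : A.card ≤ Nat.card (Subgroup.closure (S : Set G)) := by
    have hsub : (↑A : Set G) ⊆ ((Subgroup.closure (S : Set G) : Subgroup G) : Set G) := by
      rw [hS2]; exact hA1
    have h5 := Set.ncard_le_ncard hsub (Set.toFinite _)
    have e1 : Nat.card (Subgroup.closure (S : Set G)) =
        ((Subgroup.closure (S : Set G) : Subgroup G) : Set G).ncard :=
      Nat.card_coe_set_eq _
    rw [e1, ← Set.ncard_coe_finset A]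
    exact h5
  obtain ⟨T, t, hT, hTcard, hTpow⟩ :=
    ext_chain (Fintype.card G - Nat.card (Subgroup.closure (S : Set G))) S le_rfl
  have hrk : rk G ≤ T.card := Nat.sInf_le ⟨T, rfl, hT⟩
  have hpos : 0 < Nat.card (Subgroup.closure (S : Set G)) := Nat.card_pos
  have h2t : t < 2 ^ t := Nat.lt_two_pow_self
  have harith : Nat.card (Subgroup.closure (S : Set G)) + t ≤
      Nat.card (Subgroup.closure (S : Set G)) * 2 ^ t := by
    nlinarith
  have hfin : l.length + S.card ≤ Nat.card (Subgroup.closure (S : Set G)) :=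
    le_trans hcard hAcard
  omega

theorem stmt1 {G : Type*} [Group G] [Fintype G] :
    DW G ≤ Fintype.card G - rk G := by
  apply csSup_le'
  rintro d ⟨X, hX, rfl⟩
  apply csSup_le'
  rintro n ⟨g, rfl⟩
  exact Nat.le_sub_of_add_le (main_bound hX g)
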